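/- Let p be a prime, n a positive integer, and let C_1, C_2 be codes of length n over Z_p with C_1 ⊆ C_2 ⊆ C_1^⊥; when p = 2, assume further that C_1 is doubly even. If dim C_1 = k_1 and dim C_2 = k_1 + k_2, then the number of self-orthogonal codes C of length n over Z_{p^2} such that π(C) = C_1 and ι^{-1}(C) = C_2 is p^{k_1(2n−3k_1−1−2k_2)/2} if p is odd, and 2^{k_1(2n−3k_1+1−2k_2)/2} if p = 2. -/

import Mathlib

open scoped BigOperators

set_option maxHeartbeats 1000000

namespace Paper

/-- Self-orthogonality of a set of vectors w.r.t. the standard inner product. -/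
def sorth {m : ℕ} {ι : Type} [Fintype ι] (S : Set (ι → ZMod m)) : Prop :=
  ∀ x ∈ S, ∀ y ∈ S, ∑ i, x i * y i = 0

/-- The dual (as a set) of a set of vectors w.r.t. the standard inner product. -/
def dualSet {m : ℕ} {ι : Type} [Fintype ι] (S : Set (ι → ZMod m)) : Set (ι → ZMod m) :=
  {x | ∀ y ∈ S, ∑ i, x i * y i = 0}

/-- A set of vectors is doubly even if every element has Hamming weight divisible by 4. -/
def doublyEven {m : ℕ} {ι : Type} [Fintype ι] (S : Set (ι → ZMod m)) : Prop :=
  ∀ x ∈ S, 4 ∣ (Finset.univ.filter fun i => x i ≠ 0).card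

/-- Coordinatewise reduction map `(Z_{p^2})^ι → (Z_p)^ι`. -/
def res (p : ℕ) [Fact p.Prime] {ι : Type} (v : ι → ZMod (p ^ 2)) : ι → ZMod p :=
  fun i => ZMod.castHom (dvd_pow_self p (by norm_num)) (ZMod p) (v i)

/-- The injection `(Z_p)^ι → (Z_{p^2})^ι` induced by `Z_p ≅ pZ_{p^2} ⊆ Z_{p^2}`. -/
def iot (p : ℕ) {ι : Type} (v : ι → ZMod p) : ι → ZMod (p ^ 2) :=
  fun i => (p : ZMod (p ^ 2)) * (ZMod.cast (v i))

/-- Coordinatewise reduction map `(Z_4)^ι → (Z_2)^ι`. -/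
def res4 {ι : Type} (v : ι → ZMod 4) : ι → ZMod 2 :=
  fun i => ZMod.castHom (by norm_num : (2:ℕ) ∣ 4) (ZMod 2) (v i)

/-- The injection `(Z_2)^ι → (Z_4)^ι`. -/
def iot4 {ι : Type} (v : ι → ZMod 2) : ι → ZMod 4 :=
  fun i => (2 : ZMod 4) * (ZMod.cast (v i))

/-- Euclidean weight on `Z_4`. -/
def ewt (x : ZMod 4) : ℕ := if x = 0 then 0 else if x = 2 then 4 else 1

/-- A quaternary code is even if every codeword has Euclidean weight divisible by 8. -/
def evenCode {ι : Type} [Fintype ι] (S : Set (ι → ZMod 4)) : Prop :=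
  ∀ x ∈ S, 8 ∣ ∑ i, ewt (x i)

/-- The code over `Z_q` generated by the rows of an integer matrix. -/
def intRowSpan (q : ℕ) {κ ι : Type} (G : Matrix κ ι ℤ) :
    Submodule (ZMod q) (ι → ZMod q) :=
  Submodule.span (ZMod q) (Set.range fun i => fun c => ((G i c : ℤ) : ZMod q))

/-- The Gaussian binomial coefficient `[n choose k]_p`. -/
def gauss (p n k : ℕ) : ℚ :=
  ∏ i ∈ Finset.range k, ((p : ℚ) ^ n - (p : ℚ) ^ i) / ((p : ℚ) ^ k - (p : ℚ) ^ i)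


variable (p : ℕ) [hp : Fact p.Prime]

theorem psq_ne : (p^2 : ℕ) ≠ 0 := pow_ne_zero 2 hp.out.ne_zero

instance : NeZero (p^2) := ⟨psq_ne p⟩

/-- reduction hom -/
def reshom : ZMod (p^2) →+* ZMod p := ZMod.castHom (dvd_pow_self p (by norm_num)) (ZMod p)

/-- canonical lift -/
def lift0 (b : ZMod p) : ZMod (p^2) := (b.val : ZMod (p^2))

def phi (b : ZMod p) : ZMod (p^2) := (p : ZMod (p^2)) * lift0 p b

theorem res_lift0 (b : ZMod p) : reshom p (lift0 p b) = b := by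
  simp [reshom, lift0, ZMod.natCast_val, ZMod.cast_id]

theorem val_lt_psq (z : ZMod (p^2)) : z.val < p^2 := ZMod.val_lt z

theorem natCast_self_sq : ((p^2 : ℕ) : ZMod (p^2)) = 0 := ZMod.natCast_self _

theorem p_mul (z : ZMod (p^2)) : (p : ZMod (p^2)) * z = phi p (reshom p z) := by
  have hz : z = ((z.val : ℕ) : ZMod (p^2)) := by simp [ZMod.natCast_val, ZMod.cast_id]
  have hres : reshom p z = ((z.val : ℕ) : ZMod p) := by
    conv_lhs => rw [hz]
    simp [reshom]
  rw [hres]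
  have hval : ((z.val : ℕ) : ZMod p).val = z.val % p := ZMod.val_natCast p _
  rw [phi, lift0, hval]
  conv_lhs => rw [hz]
  have := Nat.div_add_mod z.val p
  calc (p : ZMod (p^2)) * ((z.val : ℕ) : ZMod (p^2))
      = ((p * z.val : ℕ) : ZMod (p^2)) := by push_cast; ring
    _ = ((p * (p * (z.val / p) + z.val % p) : ℕ) : ZMod (p^2)) := by rw [this]
    _ = ((p^2 * (z.val / p) + p * (z.val % p) : ℕ) : ZMod (p^2)) := by ring_nf
    _ = ((p * (z.val % p) : ℕ) : ZMod (p^2)) := by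
        have hsq : ((p : ℕ) : ZMod (p^2))^2 = 0 := by
          rw [← Nat.cast_pow, natCast_self_sq]
        push_cast
        rw [hsq]
        ring
    _ = (p : ZMod (p^2)) * ((z.val % p : ℕ) : ZMod (p^2)) := by push_cast; ring

theorem phi_add (a b : ZMod p) : phi p (a + b) = phi p a + phi p b := by
  have : phi p a + phi p b = (p : ZMod (p^2)) * (lift0 p a + lift0 p b) := by
    rw [phi, phi]; ring
  rw [this, p_mul, map_add, res_lift0, res_lift0]

theorem phi_zero : phi p 0 = 0 := by simp [phi, lift0]

/-- phi as an AddMonoidHom -/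
def phiHom : ZMod p →+ ZMod (p^2) := AddMonoidHom.mk' (phi p) (phi_add p)

theorem mul_phi (z : ZMod (p^2)) (b : ZMod p) :
    z * phi p b = phi p (reshom p z * b) := by
  have : z * phi p b = (p : ZMod (p^2)) * (z * lift0 p b) := by rw [phi]; ring
  rw [this, p_mul, map_mul, res_lift0]

theorem res_phi (b : ZMod p) : reshom p (phi p b) = 0 := by
  rw [phi, map_mul]
  have : reshom p ((p : ℕ) : ZMod (p^2)) = 0 := by
    simp [reshom]
  rw [this, zero_mul]

theorem phi_eq_zero_iff (b : ZMod p) : phi p b = 0 ↔ b = 0 := by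
  constructor
  · intro h
    have hval : ((p * b.val : ℕ) : ZMod (p^2)) = 0 := by
      rw [← h, phi, lift0]; push_cast; ring
    rw [ZMod.natCast_eq_zero_iff] at hval
    have hp0 : 0 < p := hp.out.pos
    have hdvd : p ∣ b.val := by
      rcases hval with ⟨c, hc⟩
      have h2 : p * b.val = p * (p * c) := by rw [pow_two] at hc; rw [hc]; ring
      have := Nat.eq_of_mul_eq_mul_left hp.out.pos h2
      exact ⟨c, this⟩
    have hlt : b.val < p := ZMod.val_lt b
    have hv0 : b.val = 0 := Nat.eq_zero_of_dvd_of_lt hdvd hlt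
    have : ((b.val : ℕ) : ZMod p) = b := by simp [ZMod.natCast_val, ZMod.cast_id]
    rw [← this, hv0]; simp
  · rintro rfl; exact phi_zero p


theorem phi_sub (a b : ZMod p) : phi p (a - b) = phi p a - phi p b :=
  map_sub (phiHom p) a b

theorem phi_inj : Function.Injective (phi p) := by
  intro a b h
  have : phi p (a - b) = 0 := by rw [phi_sub, h, sub_self]
  have := (phi_eq_zero_iff p _).mp this
  linear_combination (norm := abel) this  -- a - b = 0 → a = b

theorem exists_phi_of_res_eq_zero (z : ZMod (p^2)) (h : reshom p z = 0) :
    ∃ b : ZMod p, phi p b = z := by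
  refine ⟨reshom p z + ((z.val / p : ℕ) : ZMod p), ?_⟩
  rw [h, zero_add]
  have hz : z = ((z.val : ℕ) : ZMod (p^2)) := by simp [ZMod.natCast_val, ZMod.cast_id]
  have hdvd : p ∣ z.val := by
    have : ((z.val : ℕ) : ZMod p) = 0 := by
      rw [← h, hz]; simp [reshom]
    exact (ZMod.natCast_eq_zero_iff _ _).mp this
  have hlt : z.val / p < p := by
    have h2 : z.val < p * p := by
      have := ZMod.val_lt z
      calc z.val < p^2 := this
        _ = p * p := by ring
    exact Nat.div_lt_of_lt_mul h2
  rw [phi, lift0, ZMod.val_natCast, Nat.mod_eq_of_lt hlt]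
  calc (p : ZMod (p^2)) * ((z.val / p : ℕ) : ZMod (p^2))
      = ((p * (z.val / p) : ℕ) : ZMod (p^2)) := by push_cast; ring
    _ = ((z.val : ℕ) : ZMod (p^2)) := by rw [Nat.mul_div_cancel' hdvd]
    _ = z := hz.symm

theorem iot_eq_phi {ι : Type} (v : ι → ZMod p) : iot p v = fun i => phi p (v i) := by
  funext i
  rw [iot, phi, lift0, ZMod.natCast_val]



/-- Counting a finite set fiberwise. -/
lemma ncard_eq_of_fibers {α β : Type} [Fintype α] (s : Set α) (f : α → β) (t : Set β)
    (ht : t.Finite) (m : ℕ)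
    (hmap : ∀ a ∈ s, f a ∈ t)
    (hfib : ∀ b ∈ t, {a ∈ s | f a = b}.ncard = m) :
    s.ncard = t.ncard * m := by
  classical
  have hs : s.Finite := Set.toFinite s
  rw [Set.ncard_eq_toFinset_card _ hs, Set.ncard_eq_toFinset_card _ ht]
  rw [Finset.card_eq_sum_card_fiberwise (f := f) (t := ht.toFinset)
    (fun x hx => by
      rw [Finset.mem_coe, Set.Finite.mem_toFinset] at hx ⊢
      exact hmap x hx)]
  rw [Finset.sum_congr rfl (fun b hb => ?_), Finset.sum_const, smul_eq_mul]
  rw [Set.Finite.mem_toFinset] at hb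
  rw [← hfib b hb]
  have : {a ∈ s | f a = b} = ↑(hs.toFinset.filter (fun a => f a = b)) := by
    ext a; simp only [Finset.coe_filter, Set.Finite.mem_toFinset, Set.mem_setOf_eq]
  rw [this, Set.ncard_coe_finset]

/-- Fiber of a surjective linear map over a finite field. -/
lemma ncard_fiber_of_surjective {K V W : Type} [Field K] [Fintype K] [AddCommGroup V]
    [Module K V] [AddCommGroup W] [Module K W] [Finite V] [Finite W]
    (f : V →ₗ[K] W) (hf : Function.Surjective f) (w : W) :
    {x : V | f x = w}.ncard = Fintype.card K ^ (Module.finrank K V - Module.finrank K W) := by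
  classical
  haveI : FiniteDimensional K V := Module.Finite.of_finite
  haveI : FiniteDimensional K W := Module.Finite.of_finite
  obtain ⟨x0, hx0⟩ := hf w
  have hset : {x : V | f x = w} = (fun v => x0 + v) '' (LinearMap.ker f : Set V) := by
    ext x
    simp only [Set.mem_setOf_eq, Set.mem_image, SetLike.mem_coe, LinearMap.mem_ker]
    constructor
    · intro hx
      exact ⟨x - x0, by rw [map_sub, hx, hx0, sub_self], by abel⟩
    · rintro ⟨v, hv, rfl⟩
      rw [map_add, hx0, hv, add_zero]
  rw [hset, Set.ncard_image_of_injective _ (add_right_injective x0)]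
  have h1 : (LinearMap.ker f : Set V).ncard = Nat.card (LinearMap.ker f) := by
    rw [← Nat.card_coe_set_eq]
    rfl
  rw [h1]
  haveI : Fintype (LinearMap.ker f) := Fintype.ofFinite _
  rw [Nat.card_eq_fintype_card, Module.card_eq_pow_finrank (K := K)]
  congr 1
  have h2 := LinearMap.finrank_range_add_finrank_ker f
  rw [LinearMap.range_eq_top.mpr hf, finrank_top] at h2
  omega

/-- number of strictly increasing pairs -/
lemma card_lt_pairs (k : ℕ) : Fintype.card {q : Fin k × Fin k // q.1 < q.2} = k * (k - 1) / 2 := by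
  classical
  rw [Fintype.card_subtype]
  set ltF := Finset.univ.filter (fun q : Fin k × Fin k => q.1 < q.2) with hltF
  set gtF := Finset.univ.filter (fun q : Fin k × Fin k => q.2 < q.1) with hgtF
  have hcard : ltF.card = gtF.card := by
    apply Finset.card_bij (fun q _ => q.swap)
    · intro q hq
      simp only [hltF, hgtF, Finset.mem_filter, Finset.mem_univ, true_and] at hq ⊢
      exact hq
    · intro a ha b hb hab
      exact Prod.swap_injective hab
    · intro b hb
      refine ⟨b.swap, ?_, by simp⟩
      simp only [hltF, hgtF, Finset.mem_filter, Finset.mem_univ, true_and] at hb ⊢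
      exact hb
  have hunion : ltF ∪ gtF = Finset.univ.filter (fun q : Fin k × Fin k => q.1 ≠ q.2) := by
    ext q
    simp only [hltF, hgtF, Finset.mem_union, Finset.mem_filter, Finset.mem_univ, true_and]
    constructor
    · rintro (h | h)
      · exact ne_of_lt h
      · exact (ne_of_lt h).symm
    · intro h
      rcases lt_or_gt_of_ne h with h | h
      · exact Or.inl h
      · exact Or.inr h
  have hdisj : Disjoint ltF gtF := by
    rw [Finset.disjoint_filter]
    intro q _ h1 h2
    exact absurd h1 (asymm h2)
  have hne : (Finset.univ.filter (fun q : Fin k × Fin k => q.1 ≠ q.2)).card = k * k - k := by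
    have h0 := Finset.card_filter_add_card_filter_not
      (s := (Finset.univ : Finset (Fin k × Fin k))) (p := fun q => q.1 = q.2)
    have hdiag : (Finset.univ.filter (fun q : Fin k × Fin k => q.1 = q.2)).card
        = (Finset.univ : Finset (Fin k)).card := by
      apply Finset.card_bij (fun q _ => q.1)
      · intro a _; exact Finset.mem_univ _
      · intro a ha b hb hab
        simp only [Finset.mem_filter] at ha hb
        ext
        · exact congrArg Fin.val hab
        · rw [← ha.2, ← hb.2]; exact congrArg Fin.val hab
      · intro b _
        exact ⟨(b, b), by simp, rfl⟩
    rw [Finset.card_univ, Fintype.card_fin] at hdiag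
    have huniv : (Finset.univ : Finset (Fin k × Fin k)).card = k * k := by
      simp [Fintype.card_fin]
    simp only [ne_eq]
    omega
  have htot : ltF.card + gtF.card = k * k - k := by
    rw [← Finset.card_union_of_disjoint hdisj, hunion, hne]
  have hmul : k * (k - 1) = k * k - k := by
    cases k with
    | zero => simp
    | succ j =>
      have h1 : (j+1) * (j+1) = (j+1) * j + (j+1) := by ring
      have h2 : (j+1) * (j+1-1) = (j+1) * j := by norm_num
      omega
  omega


lemma two_ne_zero_zmod (p : ℕ) [hp : Fact p.Prime] (hp2 : p ≠ 2) : (2 : ZMod p) ≠ 0 := by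
  intro h
  have h2 : ((2:ℕ) : ZMod p) = 0 := by exact_mod_cast h
  rw [ZMod.natCast_eq_zero_iff] at h2
  exact hp2 ((Nat.prime_dvd_prime_iff_eq hp.out Nat.prime_two).mp h2)

lemma ncard_msol_odd (p k : ℕ) [hp : Fact p.Prime] (hp2 : p ≠ 2)
    (M : Fin k → Fin k → ZMod p) (hsym : ∀ i j, M i j = M j i) :
    {Y : Fin k → Fin k → ZMod p | ∀ i j, Y i j + Y j i = M i j}.ncard = p ^ (k * (k - 1) / 2) := by
  classical
  have h2 : (2 : ZMod p) ≠ 0 := two_ne_zero_zmod p hp2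
  set Msol := {Y : Fin k → Fin k → ZMod p | ∀ i j, Y i j + Y j i = M i j} with hMsol
  have E : Msol ≃ ({q : Fin k × Fin k // q.1 < q.2} → ZMod p) := by
    refine
      { toFun := fun Y q => (Y : Fin k → Fin k → ZMod p) q.1.1 q.1.2
        invFun := fun u => ⟨fun i j =>
          if h : i < j then u ⟨(i,j), h⟩
          else if h' : j < i then M j i - u ⟨(j,i), h'⟩
          else (2⁻¹ : ZMod p) * M i i, ?_⟩
        left_inv := ?_
        right_inv := ?_ }
    · intro i j
      beta_reduce
      rcases lt_trichotomy i j with h | h | h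
      · rw [dif_pos h, dif_neg (asymm h), dif_pos h]
        ring
      · subst h
        rw [dif_neg (lt_irrefl i), dif_neg (lt_irrefl i)]
        have : (2⁻¹ : ZMod p) * M i i + 2⁻¹ * M i i = (2 * 2⁻¹) * M i i := by ring
        rw [this, mul_inv_cancel₀ h2, one_mul]
      · rw [dif_neg (asymm h), dif_pos h, dif_pos h]
        rw [hsym i j]
        ring
    · rintro ⟨Y, hY⟩
      apply Subtype.ext
      funext i j
      simp only
      rcases lt_trichotomy i j with h | h | h
      · rw [dif_pos h]
      · subst h
        rw [dif_neg (lt_irrefl i), dif_neg (lt_irrefl i)]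
        have hm := hY i i
        have : (2⁻¹ : ZMod p) * M i i = 2⁻¹ * (2 * Y i i) := by
          rw [← hm]; ring
        rw [this, ← mul_assoc, inv_mul_cancel₀ h2, one_mul]
      · rw [dif_neg (asymm h), dif_pos h]
        have hm := hY j i
        rw [← hm]
        ring
    · intro u
      funext q
      obtain ⟨⟨i, j⟩, hq⟩ := q
      simp only [dif_pos hq]
  have hcard := Nat.card_congr E
  rw [Nat.card_coe_set_eq] at hcard
  rw [hcard, Nat.card_eq_fintype_card, Fintype.card_fun, ZMod.card, card_lt_pairs]

lemma zmod2_add_self (x : ZMod 2) : x + x = 0 := by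
  revert x; decide

lemma ncard_msol_two (k : ℕ) (M : Fin k → Fin k → ZMod 2) (hsym : ∀ i j, M i j = M j i)
    (hdiag : ∀ i, M i i = 0) :
    {Y : Fin k → Fin k → ZMod 2 | ∀ i j, Y i j + Y j i = M i j}.ncard = 2 ^ (k * (k + 1) / 2) := by
  classical
  set Msol := {Y : Fin k → Fin k → ZMod 2 | ∀ i j, Y i j + Y j i = M i j} with hMsol
  have E : Msol ≃ (({q : Fin k × Fin k // q.1 < q.2} → ZMod 2) × (Fin k → ZMod 2)) := by
    refine
      { toFun := fun Y => (fun q => (Y : Fin k → Fin k → ZMod 2) q.1.1 q.1.2,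
          fun i => (Y : Fin k → Fin k → ZMod 2) i i)
        invFun := fun u => ⟨fun i j =>
          if h : i < j then u.1 ⟨(i,j), h⟩
          else if h' : j < i then M j i - u.1 ⟨(j,i), h'⟩
          else u.2 i, ?_⟩
        left_inv := ?_
        right_inv := ?_ }
    · intro i j
      beta_reduce
      rcases lt_trichotomy i j with h | h | h
      · rw [dif_pos h, dif_neg (asymm h), dif_pos h]
        ring
      · subst h
        rw [dif_neg (lt_irrefl i), dif_neg (lt_irrefl i)]
        rw [zmod2_add_self, hdiag]
      · rw [dif_neg (asymm h), dif_pos h, dif_pos h]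
        rw [hsym i j]
        ring
    · rintro ⟨Y, hY⟩
      apply Subtype.ext
      funext i j
      simp only
      rcases lt_trichotomy i j with h | h | h
      · rw [dif_pos h]
      · subst h
        rw [dif_neg (lt_irrefl i), dif_neg (lt_irrefl i)]
      · rw [dif_neg (asymm h), dif_pos h]
        have hm := hY j i
        rw [← hm]
        ring
    · intro u
      apply Prod.ext
      · funext q
        obtain ⟨⟨i, j⟩, hq⟩ := q
        simp only [dif_pos hq]
      · funext i
        simp only [dif_neg (lt_irrefl i)]
  have hcard := Nat.card_congr E
  rw [Nat.card_coe_set_eq] at hcard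
  rw [hcard, Nat.card_eq_fintype_card, Fintype.card_prod, Fintype.card_fun, Fintype.card_fun,
    ZMod.card, card_lt_pairs, Fintype.card_fin]
  rw [← pow_add]
  congr 1
  have hkk : k * (k + 1) = k * (k - 1) + 2 * k := by
    cases k with
    | zero => simp
    | succ j =>
      have : (j+1) * (j+1-1) = (j+1) * j := by norm_num
      rw [this]
      ring
  rw [hkk, Nat.add_mul_div_left _ _ (by norm_num : (0:ℕ) < 2)]

lemma exp_odd (n k1 k2 : ℕ) (h : 2*k1 + k2 ≤ n) :
    k1*(k1+k2) + k1 * (2*n - 3*k1 - 1 - 2*k2) / 2 = k1*(k1-1)/2 + (k1*n - k1*k1) := by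
  cases k1 with
  | zero => simp
  | succ m =>
    set d := n - (2*(m+1)+k2) with hd
    have hnd : n = 2*(m+1)+k2+d := by omega
    have h1 : 2*n - 3*(m+1) - 1 - 2*k2 = m + 2*d := by omega
    have h3 : (m+1)*n = (m+1)*(m+1) + (m+1)*(m+1+k2+d) := by rw [hnd]; ring
    have h4 : (m+1) - 1 = m := by omega
    show (m+1)*((m+1)+k2) + (m+1) * (2*n - 3*(m+1) - 1 - 2*k2) / 2
        = (m+1)*((m+1)-1)/2 + ((m+1)*n - (m+1)*(m+1))
    rw [h1, h4]
    have e1 : 2 ∣ (m+1)*m := by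
      have := Nat.even_mul_succ_self m
      rw [mul_comm] at this
      exact this.two_dvd
    have e2 : (m+1)*(m+2*d) = (m+1)*m + 2*((m+1)*d) := by ring
    have key : 2*((m+1)*((m+1)+k2)) + ((m+1)*(m+2*d)) = (m+1)*m + 2*((m+1)*((m+1)+k2+d)) := by
      ring
    have h5 : (m+1)*(m+1+k2+d) = (m+1)*((m+1)+k2+d) := by ring
    omega

lemma exp_even (n k1 k2 : ℕ) (h : 2*k1 + k2 ≤ n) :
    k1*(k1+k2) + k1 * (2*n - 3*k1 + 1 - 2*k2) / 2 = k1*(k1+1)/2 + (k1*n - k1*k1) := by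
  cases k1 with
  | zero => simp
  | succ m =>
    set d := n - (2*(m+1)+k2) with hd
    have hnd : n = 2*(m+1)+k2+d := by omega
    have h1 : 2*n - 3*(m+1) + 1 - 2*k2 = m + 2 + 2*d := by omega
    have h3 : (m+1)*n = (m+1)*(m+1) + (m+1)*(m+1+k2+d) := by rw [hnd]; ring
    show (m+1)*((m+1)+k2) + (m+1) * (2*n - 3*(m+1) + 1 - 2*k2) / 2
        = (m+1)*((m+1)+1)/2 + ((m+1)*n - (m+1)*(m+1))
    rw [h1]
    have e1 : 2 ∣ (m+1)*(m+2) := by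
      have := Nat.even_mul_succ_self (m+1)
      have h2 : (m+1)*(m+1+1) = (m+1)*(m+2) := by ring
      rw [h2] at this
      exact this.two_dvd
    have e2 : (m+1)*(m+2+2*d) = (m+1)*(m+2) + 2*((m+1)*d) := by ring
    have key : 2*((m+1)*((m+1)+k2)) + ((m+1)*(m+2+2*d))
        = (m+1)*(m+2) + 2*((m+1)*((m+1)+k2+d)) := by ring
    have h5 : (m+1)*(m+1+k2+d) = (m+1)*((m+1)+k2+d) := by ring
    have h6 : (m+1)*((m+1)+1) = (m+1)*(m+2) := by ring
    omega

lemma sorth_span_of_pairwise {m : ℕ} {ι : Type} [Fintype ι] (T : Set (ι → ZMod m))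
    (h : ∀ u ∈ T, ∀ v ∈ T, ∑ i, u i * v i = 0) :
    sorth ((Submodule.span (ZMod m) T : Submodule (ZMod m) (ι → ZMod m)) : Set (ι → ZMod m)) := by
  intro x hx y hy
  rw [SetLike.mem_coe] at hx hy
  induction hx, hy using Submodule.span_induction₂ with
  | mem_mem u v hu hv => exact h u hu v hv
  | zero_left v hv => simp
  | zero_right u hu => simp
  | add_left u v w hu hv hw h1 h2 =>
      simp only [Pi.add_apply, add_mul, Finset.sum_add_distrib, h1, h2, add_zero]
  | add_right u v w hu hv hw h1 h2 =>
      simp only [Pi.add_apply, mul_add, Finset.sum_add_distrib, h1, h2, add_zero]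
  | smul_left a u v hu hv h1 =>
      simp only [Pi.smul_apply, smul_eq_mul, mul_assoc, ← Finset.mul_sum, h1, mul_zero]
  | smul_right a u v hu hv h1 =>
      simp only [Pi.smul_apply, smul_eq_mul]
      calc ∑ i, u i * (a * v i) = a * ∑ i, u i * v i := by
            rw [Finset.mul_sum]; congr 1; funext i; ring
        _ = 0 := by rw [h1, mul_zero]


section IotRes

variable (p : ℕ) [hp : Fact p.Prime] {ι : Type} [Fintype ι]

theorem iot_apply (v : ι → ZMod p) (i : ι) : iot p v i = phi p (v i) := by
  rw [iot_eq_phi]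

theorem res_apply (v : ι → ZMod (p^2)) (i : ι) : res p v i = reshom p (v i) := rfl

theorem iot_add (u v : ι → ZMod p) : iot p (u + v) = iot p u + iot p v := by
  funext i
  simp only [iot_apply, Pi.add_apply, phi_add]

theorem iot_sub (u v : ι → ZMod p) : iot p (u - v) = iot p u - iot p v := by
  funext i
  simp only [iot_apply, Pi.sub_apply, phi_sub]

theorem iot_zero : iot p (0 : ι → ZMod p) = 0 := by
  funext i
  simp only [iot_apply, Pi.zero_apply, phi_zero]

theorem iot_inj (u v : ι → ZMod p) (h : iot p u = iot p v) : u = v := by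
  funext i
  apply phi_inj p
  rw [← iot_apply, ← iot_apply, h]

theorem smul_iot (a : ZMod (p^2)) (c : ι → ZMod p) :
    a • iot p c = iot p (reshom p a • c) := by
  funext i
  simp only [Pi.smul_apply, iot_apply, smul_eq_mul, mul_phi]

theorem res_iot (c : ι → ZMod p) : res p (iot p c) = 0 := by
  funext i
  simp only [res_apply, iot_apply, res_phi, Pi.zero_apply]

theorem res_add (u v : ι → ZMod (p^2)) : res p (u + v) = res p u + res p v := by
  funext i
  simp only [res_apply, Pi.add_apply, map_add]

theorem res_sub (u v : ι → ZMod (p^2)) : res p (u - v) = res p u - res p v := by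
  funext i
  simp only [res_apply, Pi.sub_apply, map_sub]

theorem phi_sum {α : Type} (s : Finset α) (f : α → ZMod p) :
    phi p (∑ i ∈ s, f i) = ∑ i ∈ s, phi p (f i) :=
  map_sum (phiHom p) f s

theorem res_smul (a : ZMod (p^2)) (u : ι → ZMod (p^2)) :
    res p (a • u) = reshom p a • res p u := by
  funext i
  simp only [res_apply, Pi.smul_apply, smul_eq_mul, map_mul]

theorem ip_iot_right (u : ι → ZMod (p^2)) (w : ι → ZMod p) :
    ∑ t, u t * iot p w t = phi p (∑ t, reshom p (u t) * w t) := by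
  have hphi : phi p (∑ t, reshom p (u t) * w t) = ∑ t, phi p (reshom p (u t) * w t) :=
    map_sum (phiHom p) _ _
  rw [hphi]
  congr 1
  funext t
  rw [iot_apply, mul_phi]

theorem ip_iot_left (w : ι → ZMod p) (u : ι → ZMod (p^2)) :
    ∑ t, iot p w t * u t = phi p (∑ t, w t * reshom p (u t)) := by
  have h1 : ∑ t, iot p w t * u t = ∑ t, u t * iot p w t := by
    congr 1; funext t; ring
  have h2 : (∑ t, w t * reshom p (u t)) = ∑ t, reshom p (u t) * w t := by
    congr 1; funext t; ring
  rw [h1, h2, ip_iot_right]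

theorem ip_iot_iot (v w : ι → ZMod p) : ∑ t, iot p v t * iot p w t = 0 := by
  rw [ip_iot_right]
  have : ∑ t, reshom p (iot p v t) * w t = 0 := by
    apply Finset.sum_eq_zero
    intro t _
    rw [← res_apply, res_iot]
    simp
  rw [this, phi_zero]

end IotRes


section Main

variable (p : ℕ) [hp : Fact p.Prime] (n k1 : ℕ)
variable (C2 : Submodule (ZMod p) (Fin n → ZMod p))
variable (e : Fin k1 → (Fin n → ZMod p))
variable (B : Fin k1 → Fin k1 → ZMod p)

/-- base lift of the basis -/
def gz (i : Fin k1) : Fin n → ZMod (p^2) := fun t => lift0 p (e i t)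

/-- lifted generators -/
def gg (x : Fin k1 → Fin n → ZMod p) : Fin k1 → (Fin n → ZMod (p^2)) :=
  fun i => gz p n k1 e i + iot p (x i)

/-- iot image of C2, as a submodule over `ZMod (p^2)` -/
def Csub : Submodule (ZMod (p^2)) (Fin n → ZMod (p^2)) where
  carrier := iot p '' (C2 : Set (Fin n → ZMod p))
  add_mem' := by
    rintro a b ⟨u, hu, rfl⟩ ⟨v, hv, rfl⟩
    exact ⟨u + v, C2.add_mem hu hv, (iot_add p u v)⟩
  zero_mem' := ⟨0, C2.zero_mem, iot_zero p⟩
  smul_mem' := by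
    rintro a z ⟨u, hu, rfl⟩
    exact ⟨reshom p a • u, C2.smul_mem _ hu, (smul_iot p a u).symm⟩

/-- candidate codes -/
def FF (x : Fin k1 → Fin n → ZMod p) : Submodule (ZMod (p^2)) (Fin n → ZMod (p^2)) :=
  Submodule.span (ZMod (p^2))
    (Set.range (gg p n k1 e x) ∪ iot p '' (C2 : Set (Fin n → ZMod p)))

/-- solution set -/
def SS : Set (Fin k1 → Fin n → ZMod p) :=
  {x | ∀ i j, B i j + (∑ t, x i t * e j t) + (∑ t, x j t * e i t) = 0}

theorem res_gz (i : Fin k1) : res p (gz p n k1 e i) = e i := by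
  funext t
  exact res_lift0 p _

theorem res_gg (x : Fin k1 → Fin n → ZMod p) (i : Fin k1) :
    res p (gg p n k1 e x i) = e i := by
  rw [gg, res_add, res_gz, res_iot, add_zero]

theorem ip_gg (hB : ∀ i j, phi p (B i j) = ∑ t, gz p n k1 e i t * gz p n k1 e j t)
    (x : Fin k1 → Fin n → ZMod p) (i j : Fin k1) :
    ∑ t, gg p n k1 e x i t * gg p n k1 e x j t
      = phi p (B i j + (∑ t, x i t * e j t) + (∑ t, x j t * e i t)) := by
  have expand : ∑ t, gg p n k1 e x i t * gg p n k1 e x j t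
      = (∑ t, gz p n k1 e i t * gz p n k1 e j t)
        + ((∑ t, gz p n k1 e i t * iot p (x j) t)
        + ((∑ t, iot p (x i) t * gz p n k1 e j t)
        + (∑ t, iot p (x i) t * iot p (x j) t))) := by
    rw [← Finset.sum_add_distrib, ← Finset.sum_add_distrib, ← Finset.sum_add_distrib]
    congr 1
    funext t
    simp only [gg, Pi.add_apply]
    ring
  rw [expand, ip_iot_iot, add_zero, ip_iot_right, ip_iot_left]
  have h1 : ∀ t, reshom p (gz p n k1 e i t) = e i t := fun t => res_lift0 p _
  have h2 : ∀ t, reshom p (gz p n k1 e j t) = e j t := fun t => res_lift0 p _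
  have e1 : (∑ t, reshom p (gz p n k1 e i t) * x j t) = ∑ t, x j t * e i t := by
    congr 1; funext t; rw [h1 t]; ring
  have e2 : (∑ t, x i t * reshom p (gz p n k1 e j t)) = ∑ t, x i t * e j t := by
    congr 1; funext t; rw [h2 t]
  rw [e1, e2, ← hB i j, ← phi_add, ← phi_add]
  congr 1
  ring

theorem mem_FF_iff (x : Fin k1 → Fin n → ZMod p) (z : Fin n → ZMod (p^2)) :
    z ∈ FF p n k1 C2 e x ↔
      ∃ a : Fin k1 → ZMod (p^2), ∃ c, c ∈ C2 ∧
        z = (∑ i, a i • gg p n k1 e x i) + iot p c := by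
  have hspanC : Submodule.span (ZMod (p^2)) (iot p '' (C2 : Set (Fin n → ZMod p)))
      = Csub p n C2 := Submodule.span_eq (Csub p n C2)
  rw [FF, Submodule.span_union, hspanC, Submodule.mem_sup]
  constructor
  · rintro ⟨y, hy, w, hw, rfl⟩
    rw [Submodule.mem_span_range_iff_exists_fun] at hy
    obtain ⟨a, rfl⟩ := hy
    obtain ⟨c, hc, rfl⟩ := hw
    exact ⟨a, c, hc, rfl⟩
  · rintro ⟨a, c, hc, rfl⟩
    refine ⟨∑ i, a i • gg p n k1 e x i, ?_, iot p c, ⟨c, hc, rfl⟩, rfl⟩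
    apply Submodule.sum_mem
    intro i _
    exact Submodule.smul_mem _ _ (Submodule.subset_span (Set.mem_range_self i))

theorem res_sum_smul (a : Fin k1 → ZMod (p^2)) (v : Fin k1 → Fin n → ZMod (p^2)) :
    res p (∑ i, a i • v i) = ∑ i, reshom p (a i) • res p (v i) := by
  funext t
  rw [res_apply]
  have h1 : (∑ i, a i • v i) t = ∑ i, a i * v i t := by simp
  have h2 : (∑ i, reshom p (a i) • res p (v i)) t = ∑ i, reshom p (a i) * reshom p (v i t) := by
    simp [res_apply]
  rw [h1, h2, map_sum]
  congr 1
  funext i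
  rw [map_mul]

theorem sum_phi_smul_gg (b : Fin k1 → ZMod p) (x : Fin k1 → Fin n → ZMod p) :
    (∑ j, phi p (b j) • gg p n k1 e x j) = iot p (∑ j, b j • e j) := by
  funext t
  rw [iot_apply]
  have h1 : (∑ j, phi p (b j) • gg p n k1 e x j) t = ∑ j, phi p (b j) * gg p n k1 e x j t := by
    simp
  have h2 : (∑ j, b j • e j) t = ∑ j, b j * e j t := by simp
  rw [h1, h2, phi_sum]
  congr 1
  funext j
  have hres : reshom p (gg p n k1 e x j t) = e j t := congrFun (res_gg p n k1 e x j) t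
  calc phi p (b j) * gg p n k1 e x j t = gg p n k1 e x j t * phi p (b j) := by ring
    _ = phi p (reshom p (gg p n k1 e x j t) * b j) := mul_phi p _ _
    _ = phi p (b j * e j t) := by rw [hres]; ring_nf

theorem sorth_FF (hB : ∀ i j, phi p (B i j) = ∑ t, gz p n k1 e i t * gz p n k1 e j t)
    (horthe : ∀ c ∈ C2, ∀ i, ∑ t, c t * e i t = 0)
    (x : Fin k1 → Fin n → ZMod p) (hx : x ∈ SS p n k1 e B) :
    sorth ((FF p n k1 C2 e x : Submodule (ZMod (p^2)) (Fin n → ZMod (p^2))) :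
      Set (Fin n → ZMod (p^2))) := by
  apply sorth_span_of_pairwise
  have hgiot : ∀ (i : Fin k1), ∀ c ∈ C2, ∑ t, gg p n k1 e x i t * iot p c t = 0 := by
    intro i c hc
    rw [ip_iot_right]
    have : (∑ t, reshom p (gg p n k1 e x i t) * c t) = ∑ t, c t * e i t := by
      congr 1
      funext t
      have hret : reshom p (gg p n k1 e x i t) = e i t := congrFun (res_gg p n k1 e x i) t
      rw [hret]
      ring
    rw [this, horthe c hc i, phi_zero]
  have hiotg : ∀ (i : Fin k1), ∀ c ∈ C2, ∑ t, iot p c t * gg p n k1 e x i t = 0 := by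
    intro i c hc
    have : (∑ t, iot p c t * gg p n k1 e x i t) = ∑ t, gg p n k1 e x i t * iot p c t := by
      congr 1; funext t; ring
    rw [this]
    exact hgiot i c hc
  rintro u (⟨i, rfl⟩ | ⟨c, hc, rfl⟩) v (⟨j, rfl⟩ | ⟨d, hd, rfl⟩)
  · rw [ip_gg p n k1 e B hB x i j, hx i j, phi_zero]
  · exact hgiot i d hd
  · exact hiotg j c hc
  · exact ip_iot_iot p c d

theorem image_res_FF (x : Fin k1 → Fin n → ZMod p) :
    res p '' (FF p n k1 C2 e x : Set (Fin n → ZMod (p^2)))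
      = (Submodule.span (ZMod p) (Set.range e) : Set (Fin n → ZMod p)) := by
  apply Set.Subset.antisymm
  · rintro _ ⟨z, hz, rfl⟩
    rw [SetLike.mem_coe] at hz
    rw [mem_FF_iff] at hz
    obtain ⟨a, c, hc, rfl⟩ := hz
    rw [res_add, res_sum_smul, res_iot, add_zero]
    rw [SetLike.mem_coe]
    apply Submodule.sum_mem
    intro i _
    apply Submodule.smul_mem
    rw [res_gg]
    exact Submodule.subset_span (Set.mem_range_self i)
  · intro y hy
    rw [SetLike.mem_coe, Submodule.mem_span_range_iff_exists_fun] at hy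
    obtain ⟨cc, rfl⟩ := hy
    refine ⟨∑ i, lift0 p (cc i) • gg p n k1 e x i, ?_, ?_⟩
    · rw [SetLike.mem_coe, mem_FF_iff]
      exact ⟨fun i => lift0 p (cc i), 0, C2.zero_mem, by rw [iot_zero, add_zero]⟩
    · rw [res_sum_smul]
      congr 1
      funext i
      rw [res_gg, res_lift0]

theorem preimage_iot_FF (hindep : LinearIndependent (ZMod p) e)
    (he2 : ∀ i, e i ∈ C2) (x : Fin k1 → Fin n → ZMod p) :
    iot p ⁻¹' (FF p n k1 C2 e x : Set (Fin n → ZMod (p^2))) = (C2 : Set (Fin n → ZMod p)) := by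
  ext v
  simp only [Set.mem_preimage, SetLike.mem_coe]
  constructor
  · intro hv
    rw [mem_FF_iff] at hv
    obtain ⟨a, c, hc, heq⟩ := hv
    have hres : (0 : Fin n → ZMod p) = ∑ i, reshom p (a i) • e i := by
      have h0 := congrArg (res p) heq
      rw [res_iot, res_add, res_sum_smul, res_iot, add_zero] at h0
      simp only [res_gg] at h0
      exact h0
    have ha : ∀ i, reshom p (a i) = 0 :=
      Fintype.linearIndependent_iff.mp hindep _ hres.symm
    choose b hb using fun i => exists_phi_of_res_eq_zero p (a i) (ha i)
    have hsum : (∑ i, a i • gg p n k1 e x i) = iot p (∑ i, b i • e i) := by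
      rw [← sum_phi_smul_gg p n k1 e b x]
      congr 1
      funext i
      rw [hb i]
    rw [hsum, ← iot_add] at heq
    have hv2 : v = (∑ i, b i • e i) + c := iot_inj p _ _ heq
    rw [hv2]
    exact C2.add_mem (Submodule.sum_mem _ (fun i _ => C2.smul_mem _ (he2 i))) hc
  · intro hv
    rw [mem_FF_iff]
    refine ⟨0, v, hv, by simp⟩

theorem FF_eq_iff (hindep : LinearIndependent (ZMod p) e)
    (he2 : ∀ i, e i ∈ C2) (x x' : Fin k1 → Fin n → ZMod p) :
    FF p n k1 C2 e x' = FF p n k1 C2 e x ↔ ∀ i, x' i - x i ∈ C2 := by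
  constructor
  · intro h i
    have hgen : gg p n k1 e x' i ∈ FF p n k1 C2 e x := by
      rw [← h]
      exact Submodule.subset_span (Or.inl (Set.mem_range_self i))
    rw [mem_FF_iff] at hgen
    obtain ⟨a, c, hc, heq⟩ := hgen
    have hres : e i = ∑ j, reshom p (a j) • e j := by
      have h0 := congrArg (res p) heq
      rw [res_gg, res_add, res_sum_smul, res_iot, add_zero] at h0
      simp only [res_gg] at h0
      exact h0
    have hcoef : ∀ j, reshom p (a j) = if j = i then 1 else 0 := by
      have hzero : (∑ j, (reshom p (a j) - if j = i then 1 else 0) • e j) = 0 := by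
        have hsplit : (∑ j, (reshom p (a j) - if j = i then 1 else 0) • e j)
            = (∑ j, reshom p (a j) • e j) - ∑ j, (if j = i then (1 : ZMod p) else 0) • e j := by
          rw [← Finset.sum_sub_distrib]
          congr 1
          funext j
          rw [sub_smul]
        have hdelta : (∑ j, (if j = i then (1 : ZMod p) else 0) • e j) = e i := by
          rw [Finset.sum_congr rfl (fun j _ => by
            rw [ite_smul, one_smul, zero_smul])]
          rw [Finset.sum_ite_eq' Finset.univ i e]
          simp
        rw [hsplit, hdelta, ← hres, sub_self]
      have hind := Fintype.linearIndependent_iff.mp hindep _ hzero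
      intro j
      have := hind j
      exact sub_eq_zero.mp this
    have hres0 : ∀ j, reshom p (a j - (if j = i then 1 else 0)) = 0 := by
      intro j
      rw [map_sub, hcoef j]
      split_ifs with hji
      · simp
      · simp
    choose b hb using fun j => exists_phi_of_res_eq_zero p _ (hres0 j)
    have hsplit2 : (∑ j, a j • gg p n k1 e x j)
        = gg p n k1 e x i + iot p (∑ j, b j • e j) := by
      have ha : ∀ j, a j = (if j = i then (1 : ZMod (p^2)) else 0) + phi p (b j) := by
        intro j
        rw [hb j]
        split_ifs <;> ring
      calc (∑ j, a j • gg p n k1 e x j)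
          = ∑ j, ((if j = i then (1 : ZMod (p^2)) else 0) • gg p n k1 e x j
              + phi p (b j) • gg p n k1 e x j) := by
            congr 1
            funext j
            rw [← add_smul, ← ha j]
        _ = (∑ j, (if j = i then (1 : ZMod (p^2)) else 0) • gg p n k1 e x j)
              + ∑ j, phi p (b j) • gg p n k1 e x j := Finset.sum_add_distrib
        _ = gg p n k1 e x i + iot p (∑ j, b j • e j) := by
            rw [sum_phi_smul_gg p n k1 e b x]
            congr 1
            rw [Finset.sum_congr rfl (fun j _ => by
              rw [ite_smul, one_smul, zero_smul])]
            rw [Finset.sum_ite_eq' Finset.univ i (gg p n k1 e x)]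
            simp
    rw [hsplit2] at heq
    have hxx : iot p (x' i) = iot p (x i) + (iot p (∑ j, b j • e j) + iot p c) := by
      have h1 : gz p n k1 e i + iot p (x' i)
          = gz p n k1 e i + (iot p (x i) + (iot p (∑ j, b j • e j) + iot p c)) := by
        calc gz p n k1 e i + iot p (x' i) = gg p n k1 e x' i := rfl
          _ = gg p n k1 e x i + iot p (∑ j, b j • e j) + iot p c := heq
          _ = gz p n k1 e i + (iot p (x i) + (iot p (∑ j, b j • e j) + iot p c)) := by
              rw [gg]; abel
      exact add_left_cancel h1
    have hfinal : x' i - x i = (∑ j, b j • e j) + c := by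
      apply iot_inj p
      rw [iot_sub, iot_add, hxx]
      abel
    rw [hfinal]
    exact C2.add_mem (Submodule.sum_mem _ (fun j _ => C2.smul_mem _ (he2 j))) hc
  · intro h
    have key : ∀ y y' : Fin k1 → Fin n → ZMod p, (∀ i, y' i - y i ∈ C2) →
        FF p n k1 C2 e y' ≤ FF p n k1 C2 e y := by
      intro y y' hy
      rw [FF, Submodule.span_le]
      rintro z (⟨i, rfl⟩ | hz)
      · have hz2 : gg p n k1 e y' i = gg p n k1 e y i + iot p (y' i - y i) := by
          rw [gg, gg, iot_sub]
          abel
        rw [SetLike.mem_coe, hz2]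
        apply Submodule.add_mem
        · exact Submodule.subset_span (Or.inl (Set.mem_range_self i))
        · exact Submodule.subset_span (Or.inr ⟨y' i - y i, hy i, rfl⟩)
      · exact Submodule.subset_span (Or.inr hz)
    refine le_antisymm (key x x' h) (key x' x (fun i => ?_))
    have := C2.neg_mem (h i)
    simpa using this

theorem exists_preimage
    (hB : ∀ i j, phi p (B i j) = ∑ t, gz p n k1 e i t * gz p n k1 e j t)
    (hindep : LinearIndependent (ZMod p) e)
    (C : Submodule (ZMod (p^2)) (Fin n → ZMod (p^2)))
    (hsorth : sorth (C : Set (Fin n → ZMod (p^2))))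
    (hres : res p '' (C : Set (Fin n → ZMod (p^2)))
      = (Submodule.span (ZMod p) (Set.range e) : Set (Fin n → ZMod p)))
    (hiot : iot p ⁻¹' (C : Set (Fin n → ZMod (p^2))) = (C2 : Set (Fin n → ZMod p))) :
    ∃ x ∈ SS p n k1 e B, FF p n k1 C2 e x = C := by
  have hlift : ∀ i, ∃ gi, gi ∈ C ∧ res p gi = e i := by
    intro i
    have hei : e i ∈ res p '' (C : Set (Fin n → ZMod (p^2))) := by
      rw [hres]
      exact Submodule.subset_span (Set.mem_range_self i)
    obtain ⟨gi, hgi, hr⟩ := hei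
    exact ⟨gi, hgi, hr⟩
  choose gi hgiC hgires using hlift
  have hres0 : ∀ i t, reshom p (gi i t - gz p n k1 e i t) = 0 := by
    intro i t
    rw [map_sub]
    have h1 : reshom p (gi i t) = e i t := congrFun (hgires i) t
    have h2 : reshom p (gz p n k1 e i t) = e i t := res_lift0 p _
    rw [h1, h2, sub_self]
  choose x hx using fun i t => exists_phi_of_res_eq_zero p _ (hres0 i t)
  have hgg : ∀ i, gg p n k1 e x i = gi i := by
    intro i
    funext t
    rw [gg]
    show gz p n k1 e i t + iot p (x i) t = gi i t
    rw [iot_apply, hx i t]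
    ring
  refine ⟨x, ?_, ?_⟩
  · intro i j
    apply phi_inj p
    have h1 := ip_gg p n k1 e B hB x i j
    rw [← h1, phi_zero]
    have h2 : (∑ t, gg p n k1 e x i t * gg p n k1 e x j t) = ∑ t, gi i t * gi j t := by
      rw [hgg i, hgg j]
    rw [h2]
    exact hsorth (gi i) (hgiC i) (gi j) (hgiC j)
  · apply le_antisymm
    · rw [FF, Submodule.span_le]
      rintro z (⟨i, rfl⟩ | ⟨c, hc, rfl⟩)
      · rw [SetLike.mem_coe, hgg i]
        exact hgiC i
      · have : c ∈ iot p ⁻¹' (C : Set (Fin n → ZMod (p^2))) := by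
          rw [hiot]
          exact hc
        exact this
    · intro z hz
      have hrz : res p z ∈ res p '' (C : Set (Fin n → ZMod (p^2))) := ⟨z, hz, rfl⟩
      rw [hres, SetLike.mem_coe, Submodule.mem_span_range_iff_exists_fun] at hrz
      obtain ⟨cc, hcc⟩ := hrz
      set w := z - ∑ i, lift0 p (cc i) • gg p n k1 e x i with hw
      have hwC : w ∈ C := by
        apply C.sub_mem hz
        apply Submodule.sum_mem
        intro i _
        apply C.smul_mem
        rw [hgg i]
        exact hgiC i
      have hwres : res p w = 0 := by
        rw [hw, res_sub, res_sum_smul]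
        have : (∑ i, reshom p (lift0 p (cc i)) • res p (gg p n k1 e x i)) = ∑ i, cc i • e i := by
          congr 1
          funext i
          rw [res_lift0, res_gg]
        rw [this, hcc, sub_self]
      choose v hv using fun t => exists_phi_of_res_eq_zero p (w t) (congrFun hwres t)
      have hwiot : w = iot p v := by
        funext t
        rw [iot_apply, hv t]
      have hvC2 : v ∈ C2 := by
        have : v ∈ iot p ⁻¹' (C : Set (Fin n → ZMod (p^2))) := by
          show iot p v ∈ (C : Set (Fin n → ZMod (p^2)))
          rw [← hwiot]
          exact hwC
        rw [hiot] at this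
        exact this
      rw [mem_FF_iff]
      refine ⟨fun i => lift0 p (cc i), v, hvC2, ?_⟩
      rw [← hwiot, hw]
      abel



theorem diag_zero (x : Fin n → ZMod 2)
    (h4 : 4 ∣ (Finset.univ.filter fun t => x t ≠ 0).card) :
    (∑ t, lift0 2 (x t) * lift0 2 (x t)) = 0 := by
  have hval : ∀ b : ZMod 2, lift0 2 b * lift0 2 b = if b ≠ 0 then 1 else 0 := by decide
  rw [Finset.sum_congr rfl (fun t _ => hval (x t))]
  rw [Finset.sum_boole]
  have : ((4 : ℕ) : ZMod (2^2)) = 0 := by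
    have : (2:ℕ)^2 = 4 := by norm_num
    rw [← this]
    exact ZMod.natCast_self _
  obtain ⟨c, hc⟩ := h4
  rw [hc, Nat.cast_mul, this, zero_mul]

theorem pE_apply (v : Fin n → ZMod p) (j : Fin k1) :
    (Matrix.of fun j t => e j t).mulVecLin v j = ∑ t, e j t * v t := by
  simp [Matrix.mulVecLin_apply, Matrix.mulVec, dotProduct]

theorem pE_surj (hindep : LinearIndependent (ZMod p) e) :
    Function.Surjective ((Matrix.of fun j t => e j t).mulVecLin) := by
  set A : Matrix (Fin k1) (Fin n) (ZMod p) := Matrix.of fun j t => e j t with hA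
  have hAind : LinearIndependent (ZMod p) (fun j => A j) := hindep
  have hrank : A.rank = Fintype.card (Fin k1) := hAind.rank_matrix
  have htop : LinearMap.range A.mulVecLin = ⊤ := by
    apply Submodule.eq_top_of_finrank_eq
    have h1 : Module.finrank (ZMod p) ↥(LinearMap.range A.mulVecLin) = A.rank := rfl
    rw [h1, hrank, Fintype.card_fin, Module.finrank_pi, Fintype.card_fin]
  exact LinearMap.range_eq_top.mp htop

end Main


set_option linter.unusedVariables false

lemma exp_even' (n k1 k2 : ℕ) (h : 2*k1 + k2 ≤ n) :
    k1*(k1+1)/2 + (k1*n - k1*k1) = k1 * (2*n - 3*k1 + 1 - 2*k2) / 2 + k1*(k1+k2) := by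
  have := exp_even n k1 k2 h
  omega

lemma exp_odd' (n k1 k2 : ℕ) (h : 2*k1 + k2 ≤ n) :
    k1*(k1-1)/2 + (k1*n - k1*k1) = k1 * (2*n - 3*k1 - 1 - 2*k2) / 2 + k1*(k1+k2) := by
  have := exp_odd n k1 k2 h
  omega

lemma ineq_finish (k1 k2 kf n : ℕ) (h1 : k1 + kf = n) (h2 : k1 + k2 ≤ kf) :
    2*k1 + k2 ≤ n := by omega


/-- if `C₁ ⊆ C₂ ⊆ C₁^⊥`, `dim C₁ = k₁`, `dim C₂ = k₁ + k₂` (with `C₁` doubly even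
when `p = 2`), then the number of self-orthogonal codes `C` over `Z_{p^2}` with `π(C) = C₁` and
`ι⁻¹(C) = C₂` is `p^{k₁(2n−3k₁−1−2k₂)/2}` for odd `p` and `2^{k₁(2n−3k₁+1−2k₂)/2}` for `p = 2`. -/
theorem stmt8 (p n k1 k2 : ℕ) [Fact p.Prime] (hn : 0 < n)
    (C1 C2 : Submodule (ZMod p) (Fin n → ZMod p))
    (h12 : C1 ≤ C2)
    (h2d : (C2 : Set (Fin n → ZMod p)) ⊆ dualSet (C1 : Set (Fin n → ZMod p)))
    (hdim1 : Module.finrank (ZMod p) C1 = k1)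
    (hdim2 : Module.finrank (ZMod p) C2 = k1 + k2)
    (hde : p = 2 → doublyEven (C1 : Set (Fin n → ZMod p))) :
    {C : Submodule (ZMod (p ^ 2)) (Fin n → ZMod (p ^ 2)) |
        sorth (C : Set (Fin n → ZMod (p ^ 2))) ∧
        res p '' (C : Set (Fin n → ZMod (p ^ 2))) = (C1 : Set (Fin n → ZMod p)) ∧
        iot p ⁻¹' (C : Set (Fin n → ZMod (p ^ 2))) = (C2 : Set (Fin n → ZMod p))}.ncard
      = if p = 2 then 2 ^ (k1 * (2 * n - 3 * k1 + 1 - 2 * k2) / 2)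
        else p ^ (k1 * (2 * n - 3 * k1 - 1 - 2 * k2) / 2) := by
  classical
  set Codes := {C : Submodule (ZMod (p ^ 2)) (Fin n → ZMod (p ^ 2)) |
        sorth (C : Set (Fin n → ZMod (p ^ 2))) ∧
        res p '' (C : Set (Fin n → ZMod (p ^ 2))) = (C1 : Set (Fin n → ZMod p)) ∧
        iot p ⁻¹' (C : Set (Fin n → ZMod (p ^ 2))) = (C2 : Set (Fin n → ZMod p))} with hCodesDef
  -- basis of C1
  let bb : Module.Basis (Fin k1) (ZMod p) C1 := (Module.finBasis (ZMod p) C1).reindex (finCongr hdim1)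
  set e : Fin k1 → (Fin n → ZMod p) := fun i => ((bb i : C1) : Fin n → ZMod p) with he_def
  have he_mem : ∀ i, e i ∈ C1 := fun i => (bb i).2
  have he_indep : LinearIndependent (ZMod p) e := by
    have h1 := bb.linearIndependent
    exact h1.map' C1.subtype (Submodule.ker_subtype C1)
  have he_span : Submodule.span (ZMod p) (Set.range e) = C1 := by
    have h1 : Set.range e = C1.subtype '' Set.range bb := by
      rw [← Set.range_comp]
      rfl
    rw [h1, Submodule.span_image, bb.span_eq, Submodule.map_top, Submodule.range_subtype]
  have he2 : ∀ i, e i ∈ C2 := fun i => h12 (he_mem i)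
  have horthe : ∀ c ∈ C2, ∀ i, ∑ t, c t * e i t = 0 := fun c hc i => h2d hc (e i) (he_mem i)
  have hee : ∀ i j, ∑ t, e i t * e j t = 0 := fun i j => horthe (e i) (he2 i) j
  -- the matrix B
  have hB0 : ∀ i j, ∃ b : ZMod p, phi p b = ∑ t, gz p n k1 e i t * gz p n k1 e j t := by
    intro i j
    apply exists_phi_of_res_eq_zero
    have hcalc : reshom p (∑ t, gz p n k1 e i t * gz p n k1 e j t) = ∑ t, e i t * e j t := by
      rw [map_sum]
      congr 1
      funext t
      rw [map_mul,
        show reshom p (gz p n k1 e i t) = e i t from res_lift0 p _,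
        show reshom p (gz p n k1 e j t) = e j t from res_lift0 p _]
    rw [hcalc, hee]
  choose B hB using hB0
  have hBsym : ∀ i j, B i j = B j i := by
    intro i j
    apply phi_inj p
    rw [hB, hB]
    congr 1
    funext t
    ring
  have hBdiag : p = 2 → ∀ i, B i i = 0 := by
    intro hp2
    subst hp2
    intro i
    apply phi_inj 2
    rw [hB, phi_zero]
    exact diag_zero n (e i) (hde rfl (e i) (he_mem i))
  -- membership of FF in Codes
  have hmapCodes : ∀ x ∈ SS p n k1 e B, FF p n k1 C2 e x ∈ Codes := by
    intro x hx
    refine ⟨sorth_FF p n k1 C2 e B hB horthe x hx, ?_, preimage_iot_FF p n k1 C2 e he_indep he2 x⟩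
    rw [image_res_FF p n k1 C2 e x, he_span]
  -- fibers over Codes
  have hC2card : Nat.card C2 = p ^ (k1 + k2) := by
    haveI : Fintype C2 := Fintype.ofFinite _
    rw [Nat.card_eq_fintype_card, Module.card_eq_pow_finrank (K := ZMod p), ZMod.card, hdim2]
  have hGcard : {c : Fin k1 → Fin n → ZMod p | ∀ i, c i ∈ C2}.ncard = (p ^ (k1 + k2))^k1 := by
    have hEq : {c : Fin k1 → Fin n → ZMod p | ∀ i, c i ∈ C2} ≃ (Fin k1 → C2) :=
      { toFun := fun c i => ⟨c.1 i, c.2 i⟩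
        invFun := fun f => ⟨fun i => f i, fun i => (f i).2⟩
        left_inv := fun c => rfl
        right_inv := fun f => funext fun i => Subtype.ext rfl }
    have hcard := Nat.card_congr hEq
    rw [Nat.card_coe_set_eq] at hcard
    rw [hcard, Nat.card_fun, hC2card, Nat.card_eq_fintype_card, Fintype.card_fin]
  have hfibCodes : ∀ Cc ∈ Codes, {x ∈ SS p n k1 e B | FF p n k1 C2 e x = Cc}.ncard
      = (p ^ (k1 + k2))^k1 := by
    intro Cc hCc
    obtain ⟨x0, hx0S, hx0F⟩ := exists_preimage p n k1 C2 e B hB he_indep Cc hCc.1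
      (by rw [hCc.2.1, he_span]) hCc.2.2
    have hset : {x ∈ SS p n k1 e B | FF p n k1 C2 e x = Cc}
        = (fun c => x0 + c) '' {c : Fin k1 → Fin n → ZMod p | ∀ i, c i ∈ C2} := by
      ext x
      simp only [Set.mem_setOf_eq, Set.mem_image]
      constructor
      · rintro ⟨hxS, hxF⟩
        refine ⟨x - x0, fun i => ?_, by abel⟩
        have hd := (FF_eq_iff p n k1 C2 e he_indep he2 x0 x).mp (hxF.trans hx0F.symm)
        simpa using hd i
      · rintro ⟨c, hc, rfl⟩
        constructor
        · intro i j
          have h0 := hx0S i j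
          have hexp1 : (∑ t, (x0 + c) i t * e j t)
              = (∑ t, x0 i t * e j t) + ∑ t, c i t * e j t := by
            rw [← Finset.sum_add_distrib]
            congr 1
            funext t
            simp [add_mul]
          have hexp2 : (∑ t, (x0 + c) j t * e i t)
              = (∑ t, x0 j t * e i t) + ∑ t, c j t * e i t := by
            rw [← Finset.sum_add_distrib]
            congr 1
            funext t
            simp [add_mul]
          rw [hexp1, hexp2, horthe (c i) (hc i) j, horthe (c j) (hc j) i]
          rw [add_zero, add_zero]
          exact h0
        · rw [← hx0F]
          apply (FF_eq_iff p n k1 C2 e he_indep he2 x0 (x0 + c)).mpr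
          intro i
          simpa using hc i
    rw [hset, Set.ncard_image_of_injective _ (add_right_injective x0), hGcard]
  -- the linear map psi and Msol
  set pE : (Fin n → ZMod p) →ₗ[ZMod p] (Fin k1 → ZMod p)
    := (Matrix.of fun j t => e j t).mulVecLin with hpE_def
  have hpE_surj : Function.Surjective pE := pE_surj p n k1 e he_indep
  set psiL : (Fin k1 → Fin n → ZMod p) →ₗ[ZMod p] (Fin k1 → Fin k1 → ZMod p)
    := LinearMap.pi (fun i : Fin k1 => pE.comp (LinearMap.proj i)) with hpsiL_def
  have hpsi_apply : ∀ x i j, psiL x i j = ∑ t, e j t * x i t := by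
    intro x i j
    rw [hpsiL_def]
    have h1 : LinearMap.pi (fun i : Fin k1 => pE.comp (LinearMap.proj i)) x i = pE (x i) := rfl
    rw [h1, hpE_def]
    exact pE_apply p n k1 e (x i) j
  have hpsi_surj : Function.Surjective psiL := by
    intro Y
    choose v hv using fun i => hpE_surj (Y i)
    exact ⟨fun i => v i, funext fun i => hv i⟩
  set Mneg : Fin k1 → Fin k1 → ZMod p := fun i j => -(B i j) with hMneg_def
  set Msol := {Y : Fin k1 → Fin k1 → ZMod p | ∀ i j, Y i j + Y j i = Mneg i j} with hMsol_def
  have hcomm : ∀ (x : Fin k1 → Fin n → ZMod p) (i j : Fin k1),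
      (∑ t, e j t * x i t) = ∑ t, x i t * e j t := by
    intro x i j
    congr 1
    funext t
    ring
  have hmapMsol : ∀ x ∈ SS p n k1 e B, psiL x ∈ Msol := by
    intro x hx i j
    have h0 := hx i j
    rw [hpsi_apply, hpsi_apply, hcomm, hcomm, hMneg_def]
    linear_combination h0
  have hSS_iff : ∀ x, x ∈ SS p n k1 e B ↔ psiL x ∈ Msol := by
    intro x
    constructor
    · exact fun hx => hmapMsol x hx
    · intro hx i j
      have h0 := hx i j
      rw [hpsi_apply, hpsi_apply, hcomm, hcomm] at h0
      have : Mneg i j = -(B i j) := rfl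
      rw [this] at h0
      linear_combination h0
  -- finrank facts
  have hfinV : Module.finrank (ZMod p) (Fin k1 → Fin n → ZMod p) = k1 * n := by
    rw [Module.finrank_pi_fintype]
    simp [Module.finrank_pi, Finset.sum_const, Finset.card_univ, Fintype.card_fin]
  have hfinW : Module.finrank (ZMod p) (Fin k1 → Fin k1 → ZMod p) = k1 * k1 := by
    rw [Module.finrank_pi_fintype]
    simp [Module.finrank_pi, Finset.sum_const, Finset.card_univ, Fintype.card_fin]
  have hfibMsol : ∀ Y ∈ Msol, {x ∈ SS p n k1 e B | psiL x = Y}.ncard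
      = p ^ (k1 * n - k1 * k1) := by
    intro Y hY
    have hset : {x ∈ SS p n k1 e B | psiL x = Y} = {x | psiL x = Y} := by
      ext x
      simp only [Set.mem_setOf_eq]
      constructor
      · exact fun h => h.2
      · intro h
        refine ⟨?_, h⟩
        rw [hSS_iff, h]
        exact hY
    rw [hset, ncard_fiber_of_surjective psiL hpsi_surj Y, ZMod.card, hfinV, hfinW]
  -- the two counts
  haveI hfinsub : Finite (Submodule (ZMod (p^2)) (Fin n → ZMod (p^2))) :=
    Finite.of_injective (fun M => (M : Set (Fin n → ZMod (p^2)))) SetLike.coe_injective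
  have hcount1 : (SS p n k1 e B).ncard = Codes.ncard * (p ^ (k1 + k2))^k1 :=
    ncard_eq_of_fibers _ (FF p n k1 C2 e) Codes (Set.toFinite _) _ hmapCodes hfibCodes
  have hcount2 : (SS p n k1 e B).ncard = Msol.ncard * p ^ (k1 * n - k1 * k1) :=
    ncard_eq_of_fibers _ psiL Msol (Set.toFinite _) _ hmapMsol hfibMsol
  -- the dimension inequality
  have hineq : 2 * k1 + k2 ≤ n := by
    have hker : C2 ≤ LinearMap.ker pE := by
      intro c hc
      rw [LinearMap.mem_ker]
      funext j
      have h1 : pE c j = ∑ t, e j t * c t := by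
        rw [hpE_def]
        exact pE_apply p n k1 e c j
      have h2 : (∑ t, e j t * c t) = ∑ t, c t * e j t := by
        congr 1
        funext t
        ring
      rw [h1, h2, horthe c hc j]
      rfl
    have hrn := LinearMap.finrank_range_add_finrank_ker pE
    rw [LinearMap.range_eq_top.mpr hpE_surj, finrank_top] at hrn
    have hd1 : Module.finrank (ZMod p) (Fin n → ZMod p) = n := by
      rw [Module.finrank_pi]
      exact Fintype.card_fin n
    have hd2 : Module.finrank (ZMod p) (Fin k1 → ZMod p) = k1 := by
      rw [Module.finrank_pi]
      exact Fintype.card_fin k1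
    have hmono := Submodule.finrank_mono hker
    rw [hdim2] at hmono
    rw [hd1, hd2] at hrn
    exact ineq_finish k1 k2 _ n hrn hmono
  -- final assembly
  by_cases hp2 : p = 2
  · subst hp2
    rw [if_pos rfl]
    have hMsolcard : Msol.ncard = 2 ^ (k1 * (k1 + 1) / 2) := by
      rw [hMsol_def]
      exact ncard_msol_two k1 Mneg
        (fun i j => by simp only [hMneg_def]; rw [hBsym i j])
        (fun i => by simp only [hMneg_def]; rw [hBdiag rfl i, neg_zero])
    have hpowmul : ((2:ℕ) ^ (k1 + k2))^k1 = 2 ^ (k1 * (k1 + k2)) := by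
      rw [← pow_mul, Nat.mul_comm]
    have hcomb : Codes.ncard * 2 ^ (k1 * (k1 + k2)) = 2 ^ (k1*(k1+1)/2 + (k1*n - k1*k1)) := by
      rw [← hpowmul, ← hcount1, hcount2, hMsolcard, ← pow_add]
    have hexp := exp_even n k1 k2 hineq
    have hfinal : Codes.ncard * 2 ^ (k1 * (k1 + k2))
        = 2 ^ (k1 * (2*n - 3*k1 + 1 - 2*k2) / 2) * 2 ^ (k1 * (k1 + k2)) := by
      rw [hcomb, ← pow_add]
      congr 1
      exact exp_even' n k1 k2 hineq
    have hpos : 0 < (2:ℕ) ^ (k1 * (k1 + k2)) := pow_pos (by norm_num) _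
    exact Nat.eq_of_mul_eq_mul_right hpos hfinal
  · rw [if_neg hp2]
    have hMsolcard : Msol.ncard = p ^ (k1 * (k1 - 1) / 2) := by
      rw [hMsol_def]
      exact ncard_msol_odd p k1 hp2 Mneg
        (fun i j => by simp only [hMneg_def]; rw [hBsym i j])
    have hpowmul : ((p:ℕ) ^ (k1 + k2))^k1 = p ^ (k1 * (k1 + k2)) := by
      rw [← pow_mul, Nat.mul_comm]
    have hcomb : Codes.ncard * p ^ (k1 * (k1 + k2)) = p ^ (k1*(k1-1)/2 + (k1*n - k1*k1)) := by
      rw [← hpowmul, ← hcount1, hcount2, hMsolcard, ← pow_add]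
    have hexp := exp_odd n k1 k2 hineq
    have hfinal : Codes.ncard * p ^ (k1 * (k1 + k2))
        = p ^ (k1 * (2*n - 3*k1 - 1 - 2*k2) / 2) * p ^ (k1 * (k1 + k2)) := by
      rw [hcomb, ← pow_add]
      congr 1
      exact exp_odd' n k1 k2 hineq
    have hpos : 0 < (p:ℕ) ^ (k1 * (k1 + k2)) := pow_pos (Fact.out (p := p.Prime)).pos _
    exact Nat.eq_of_mul_eq_mul_right hpos hfinal

end Paper
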